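/- If a similarity scheme satisfies property (P2) (whenever y_∞ ∈ Γ_n(x_n) for some x_n ∈ X_n, such x_n is unique), then the relation R (defined by y_∞ R y'_∞ iff y_∞ = y'_∞ or there exist n and x_n ∈ X_n with y_∞, y'_∞ ∈ Γ_n(x_n)) is transitive, hence an equivalence relation; moreover the induced maps φ_{∞,n}: X_n → X_∞ = Y^ℕ/R are injective. -/
import Mathlib


set_option linter.unusedSectionVars false
set_option linter.unusedVariables false

variable {Y : Type}

/-- Iterated embedding φ_{n,m} : X m → X n for m ≤ n. -/
def phiTo (X : ℕ → Type) (φs : ∀ n, X n → X (n + 1)) {m n : ℕ} (h : m ≤ n) (x : X m) : X n :=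
  Nat.leRecOn h (fun {k} x => φs k x) x

/-- Iterated projection π_{m,q} : Yᵐ × X q → X (q+m), the head of the word acting outermost. -/
def piFin (X : ℕ → Type) (πo : ∀ n, Y → X n → X (n + 1)) :
    ∀ (m q : ℕ), (Fin m → Y) → X q → X (q + m)
  | 0, _, _, x => x
  | m + 1, q, y, x => πo (q + m) (y 0) (piFin X πo m q (fun i => y i.succ) x)

/-- Iterated projection π_{m,0} : Yᵐ × X 0 → X m. -/
def piFin0 (X : ℕ → Type) (πo : ∀ n, Y → X n → X (n + 1)) :
    ∀ (m : ℕ), (Fin m → Y) → X 0 → X m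
  | 0, _, x => x
  | m + 1, y, x => πo m (y 0) (piFin0 X πo m (fun i => y i.succ) x)

/-- The set Γ_n(x_n) ⊂ Y^ℕ : all infinite addresses y such that for every p ≥ n the point
φ_{p,n}(x_n) lies in the cell C(y₁,…,y_p) = π_{p,0}({(y₁,…,y_p)} × X 0). -/
def Gamma (X : ℕ → Type) (φs : ∀ n, X n → X (n + 1)) (πo : ∀ n, Y → X n → X (n + 1))
    (n : ℕ) (xn : X n) : Set (ℕ → Y) :=
  { y | ∀ p, ∀ h : n ≤ p, ∃ x0 : X 0, phiTo X φs h xn = piFin0 X πo p (fun i : Fin p => y i.1) x0 }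

/-- The relation R on Y^ℕ: related iff equal or both in some Γ_n(x_n). -/
def simRel (X : ℕ → Type) (φs : ∀ n, X n → X (n + 1)) (πo : ∀ n, Y → X n → X (n + 1)) :
    (ℕ → Y) → (ℕ → Y) → Prop :=
  fun a b => a = b ∨ ∃ n, ∃ xn : X n, a ∈ Gamma X φs πo n xn ∧ b ∈ Gamma X φs πo n xn

variable {X : ℕ → Type}
  [TopologicalSpace Y] [CompactSpace Y] [T2Space Y]
  [∀ n, TopologicalSpace (X n)] [∀ n, CompactSpace (X n)] [∀ n, T2Space (X n)]


lemma phiTo_trans (X : ℕ → Type) (φs : ∀ n, X n → X (n + 1)) {m n p : ℕ}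
    (h1 : m ≤ n) (h2 : n ≤ p) (x : X m) :
    phiTo X φs (h1.trans h2) x = phiTo X φs h2 (phiTo X φs h1 x) :=
  Nat.leRecOn_trans h1 h2 x

lemma Gamma_mono (X : ℕ → Type) (φs : ∀ n, X n → X (n + 1)) (πo : ∀ n, Y → X n → X (n + 1))
    {m n : ℕ} (h : m ≤ n) (xm : X m) {y : ℕ → Y} (hy : y ∈ Gamma X φs πo m xm) :
    y ∈ Gamma X φs πo n (phiTo X φs h xm) := by
  intro p hp
  obtain ⟨x0, hx0⟩ := hy p (h.trans hp)
  exact ⟨x0, by rw [← phiTo_trans X φs h hp xm]; exact hx0⟩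

lemma phiTo_inj (X : ℕ → Type) (φs : ∀ n, X n → X (n + 1))
    (hφi : ∀ n, Function.Injective (φs n)) {m n : ℕ} (h : m ≤ n) :
    Function.Injective (phiTo X φs (m := m) (n := n) h) := by
  induction n, h using Nat.le_induction with
  | base =>
    intro a b hab
    rwa [phiTo, phiTo, Nat.leRecOn_self, Nat.leRecOn_self] at hab
  | succ n h ih =>
    intro a b hab
    rw [phiTo, phiTo, Nat.leRecOn_succ h, Nat.leRecOn_succ h] at hab
    exact ih (hφi n hab)

theorem statement_10
    (φs : ∀ n, X n → X (n + 1)) (πo : ∀ n, Y → X n → X (n + 1))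
    (hφc : ∀ n, Continuous (φs n)) (hφi : ∀ n, Function.Injective (φs n))
    (hπc : ∀ n, Continuous fun p : Y × X n => πo n p.1 p.2)
    (hπs : ∀ n, Function.Surjective fun p : Y × X n => πo n p.1 p.2)
    (hcomm : ∀ (n : ℕ) (y : Y) (x : X n), πo (n + 1) y (φs n x) = φs (n + 1) (πo n y x))
    (hquot : ∀ (n : ℕ) (y y' : Y) (ξ ξ' : X n), πo n y ξ = πo n y' ξ' → (y, ξ) ≠ (y', ξ') →
      ∃ x0 x0' : X 0, ξ = phiTo X φs (Nat.zero_le n) x0 ∧ ξ' = phiTo X φs (Nat.zero_le n) x0' ∧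
        πo 0 y x0 = πo 0 y' x0')
    (hP2 : ∀ (n : ℕ) (xn xn' : X n) (y : ℕ → Y),
      y ∈ Gamma X φs πo n xn → y ∈ Gamma X φs πo n xn' → xn = xn') :
    Equivalence (simRel X φs πo) ∧
    ∀ (n : ℕ) (xn xn' : X n) (y y' : ℕ → Y),
      y ∈ Gamma X φs πo n xn → y' ∈ Gamma X φs πo n xn' →
      Quot.mk (simRel X φs πo) y = Quot.mk (simRel X φs πo) y' → xn = xn' := by
  have key : ∀ (n : ℕ) (xn xn' : X n) (y y' : ℕ → Y),
      y ∈ Gamma X φs πo n xn → y' ∈ Gamma X φs πo n xn' →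
      simRel X φs πo y y' → xn = xn' := by
    intro n xn xn' y y' hy hy' hrel
    rcases hrel with rfl | ⟨m, xm, hym, hym'⟩
    · exact hP2 n xn xn' y hy hy'
    · rcases le_total n m with h | h
      · have h1 := hP2 m (phiTo X φs h xn) xm y (Gamma_mono X φs πo h xn hy) hym
        have h2 := hP2 m (phiTo X φs h xn') xm y' (Gamma_mono X φs πo h xn' hy') hym'
        exact phiTo_inj X φs hφi h (h1.trans h2.symm)
      · have h1 := hP2 n xn (phiTo X φs h xm) y hy (Gamma_mono X φs πo h xm hym)
        have h2 := hP2 n xn' (phiTo X φs h xm) y' hy' (Gamma_mono X φs πo h xm hym')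
        exact h1.trans h2.symm
  have heq : Equivalence (simRel X φs πo) := by
    constructor
    · intro a; exact Or.inl rfl
    · intro a b hab
      rcases hab with rfl | ⟨n, xn, h1, h2⟩
      · exact Or.inl rfl
      · exact Or.inr ⟨n, xn, h2, h1⟩
    · intro a b c hab hbc
      rcases hab with rfl | ⟨n, xn, ha, hb⟩
      · exact hbc
      rcases hbc with rfl | ⟨m, xm, hb', hc⟩
      · exact Or.inr ⟨n, xn, ha, hb⟩
      rcases le_total n m with h | h
      · have : phiTo X φs h xn = xm :=
          hP2 m _ _ b (Gamma_mono X φs πo h xn hb) hb'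
        exact Or.inr ⟨m, xm, this ▸ Gamma_mono X φs πo h xn ha, hc⟩
      · have : phiTo X φs h xm = xn :=
          (hP2 n _ _ b hb (Gamma_mono X φs πo h xm hb')).symm
        exact Or.inr ⟨n, xn, ha, this ▸ Gamma_mono X φs πo h xm hc⟩
  refine ⟨heq, fun n xn xn' y y' hy hy' hq => ?_⟩
  have := Quot.eqvGen_exact hq
  exact key n xn xn' y y' hy hy' (heq.eqvGen_iff.mp this)
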